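/- Let μ1 ∈ ℝ^{d1} and μ2 ∈ ℝ^{d2} be vectors of nonnegative reals with Σ_i μ1_i² = 1 and Σ_i μ2_i² = 1, identified with the diagonal matrices diag(μ1) and diag(μ2). Then the following are equivalent: (a) there exists ε > 0 such that for all complex d1×d2 matrices α and β, Tr((βᵀ μ1 α)ᴴ (βᵀ μ1 α)) ≥ (1+ε)·|Tr(μ2 βᵀ μ1 α)|²; (b) the number of nonzero entries of μ1 is strictly smaller than the number of nonzero entries of μ2. (In the language of the paper: the simplified witness W̃_ε(ψ1,ψ2) = P_{ψ1} ⊗ (I − (1+ε)P_{ψ2}) can be chosen nontrivial, i.e. with ε > 0 while remaining positive on product vectors, exactly when the Schmidt rank of ψ1 is strictly smaller than that of ψ2.) -/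

import Mathlib

open Matrix BigOperators
open scoped ComplexInnerProductSpace

/-- The diagonal matrix of the (real) coefficients `μ`, as a complex matrix. -/
noncomputable def diagC {d : ℕ} (μ : Fin d → ℝ) : Matrix (Fin d) (Fin d) ℂ :=
  Matrix.diagonal fun i => (μ i : ℂ)

/-- The number of nonzero entries of `μ`. -/
noncomputable def nnzCount {d : ℕ} (μ : Fin d → ℝ) : ℕ :=
  (Finset.univ.filter fun i => μ i ≠ 0).card

lemma entry_eq {d1 d2 : ℕ} (μ1 : Fin d1 → ℝ) (α β : Matrix (Fin d1) (Fin d2) ℂ) (j k : Fin d2) :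
    (βᵀ * diagC μ1 * α) j k = ∑ i, β i j * (μ1 i : ℂ) * α i k := by
  simp only [Matrix.mul_apply, diagC, Matrix.mul_diagonal, Matrix.transpose_apply,
    Matrix.diagonal_apply, Finset.sum_ite_eq, Finset.mem_univ, if_true]
  refine Finset.sum_congr rfl fun i _ => ?_
  simp [Finset.sum_ite_eq', Matrix.diagonal_apply]

lemma trace1 {d2 : ℕ} (μ2 : Fin d2 → ℝ) (N : Matrix (Fin d2) (Fin d2) ℂ) :
    (diagC μ2 * N).trace = ∑ j, (μ2 j : ℂ) * N j j := by
  simp [Matrix.trace, Matrix.diag, diagC, Matrix.diagonal_mul]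

lemma trace2 {d2 : ℕ} (N : Matrix (Fin d2) (Fin d2) ℂ) :
    ((Nᴴ * N).trace).re = ∑ j, ∑ k, ‖N j k‖ ^ 2 := by
  have : (Nᴴ * N).trace = ((∑ k, ∑ j, ‖N j k‖ ^ 2 : ℝ) : ℂ) := by
    simp only [Matrix.trace, Matrix.diag, Matrix.mul_apply, Matrix.conjTranspose_apply]
    push_cast
    congr 1; funext k; congr 1; funext j
    rw [show star (N j k) = (starRingEnd ℂ) (N j k) from rfl, RCLike.conj_mul]
    norm_cast
  rw [this, Complex.ofReal_re, Finset.sum_comm]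

/-- Any element of a finite-dimensional subspace is a combination of an orthonormal family
of size the rank. -/
lemma subspace_orthonormal_repr {E : Type*} [NormedAddCommGroup E] [InnerProductSpace ℂ E]
    (V : Submodule ℂ E) [FiniteDimensional ℂ V] :
    ∃ u : Fin (Module.finrank ℂ V) → E, Orthonormal ℂ u ∧
      ∀ x ∈ V, x = ∑ i, ⟪u i, x⟫ • u i := by
  set b := stdOrthonormalBasis ℂ V
  refine ⟨fun i => (b i : E), b.orthonormal.comp_linearIsometry V.subtypeₗᵢ, ?_⟩
  intro x hx
  have hrepr := b.sum_repr' (⟨x, hx⟩ : V)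
  calc x = ((⟨x, hx⟩ : V) : E) := rfl
    _ = ((∑ i, ⟪b i, (⟨x, hx⟩ : V)⟫ • b i : V) : E) := by rw [hrepr]
    _ = ∑ i, ((⟪b i, (⟨x, hx⟩ : V)⟫ • b i : V) : E) :=
        AddSubmonoidClass.coe_finset_sum _ _
    _ = ∑ i, ⟪((b i : E)), x⟫ • ((b i : E)) := by
        refine Finset.sum_congr rfl fun i _ => ?_
        rw [SetLike.val_smul, Submodule.coe_inner]

lemma euclid_sum_apply {n : ℕ} {ι : Type*} (s : Finset ι)
    (f : ι → EuclideanSpace ℂ (Fin n)) (j : Fin n) :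
    (∑ i ∈ s, f i) j = ∑ i ∈ s, f i j := by
  rw [show (∑ i ∈ s, f i) j = PiLp.projₗ (𝕜 := ℂ) 2 (fun _ : Fin n => ℂ) j (∑ i ∈ s, f i)
    from rfl, map_sum]
  rfl

lemma exists_expansion {d1 d2 : ℕ} (μ1 : Fin d1 → ℝ) (α β : Matrix (Fin d1) (Fin d2) ℂ) :
    ∃ (t : ℕ) (u : Fin t → EuclideanSpace ℂ (Fin d2)) (γ : Fin t → Fin d2 → ℂ),
      t ≤ nnzCount μ1 ∧ Orthonormal ℂ u ∧
      ∀ j k, (βᵀ * diagC μ1 * α) j k = ∑ m', γ m' k * u m' j := by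
  classical
  set S1 : Finset (Fin d1) := Finset.univ.filter fun i => μ1 i ≠ 0 with hS1
  set w : Fin d1 → EuclideanSpace ℂ (Fin d2) :=
    fun i => WithLp.toLp 2 (fun j => β i j * (μ1 i : ℂ)) with hw
  set V : Submodule ℂ (EuclideanSpace ℂ (Fin d2)) :=
    Submodule.span ℂ ((S1.image w : Finset (EuclideanSpace ℂ (Fin d2))) : Set _) with hV
  have ht : Module.finrank ℂ V ≤ nnzCount μ1 :=
    le_trans (finrank_span_finset_le_card _) Finset.card_image_le
  obtain ⟨u, hu, hurep⟩ := subspace_orthonormal_repr V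
  set c : Fin d2 → EuclideanSpace ℂ (Fin d2) :=
    fun k => WithLp.toLp 2 (fun j => (βᵀ * diagC μ1 * α) j k) with hc
  have hmem : ∀ k, c k ∈ V := by
    intro k
    have hceq : c k = ∑ i ∈ S1, α i k • w i := by
      ext j
      rw [euclid_sum_apply]
      have hrhs : ∑ i ∈ S1, (α i k • w i) j = ∑ i ∈ S1, α i k * (β i j * (μ1 i : ℂ)) := rfl
      rw [hrhs, hc]
      simp only [entry_eq, PiLp.toLp_apply]
      rw [← Finset.sum_subset (Finset.subset_univ S1)]
      · exact Finset.sum_congr rfl fun i _ => by ring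
      · intro i _ hi
        have : μ1 i = 0 := by
          by_contra h
          exact hi (by simp [hS1, h])
        simp [this]
    rw [hceq]
    exact Submodule.sum_mem _ fun i hi => Submodule.smul_mem _ _
      (Submodule.subset_span (Finset.mem_coe.mpr (Finset.mem_image_of_mem w hi)))
  refine ⟨Module.finrank ℂ V, u, (fun m k => ⟪u m, c k⟫), ht, hu, ?_⟩
  intro j k
  have hcoe := hurep (c k) (hmem k)
  have happ := congrArg (fun x : EuclideanSpace ℂ (Fin d2) => x j) hcoe
  simp only at happ
  rw [euclid_sum_apply] at happ
  exact happ.trans (Finset.sum_congr rfl fun m _ => rfl)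

lemma key_bound {d2 t : ℕ} (μ2 : Fin d2 → ℝ) (m : ℝ)
    (h2pos : ∀ j, 0 ≤ μ2 j)
    (hm0 : 0 ≤ m) (hmle : ∀ j, μ2 j ≠ 0 → m ≤ μ2 j ^ 2)
    (h2norm : ∑ j, μ2 j ^ 2 = 1)
    (ht : t < nnzCount μ2)
    (u : Fin t → EuclideanSpace ℂ (Fin d2)) (hu : Orthonormal ℂ u)
    (γ : Fin t → Fin d2 → ℂ)
    (M : Matrix (Fin d2) (Fin d2) ℂ)
    (hM : ∀ j k, M j k = ∑ m', γ m' k * u m' j) :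
    ‖∑ j, (μ2 j : ℂ) * M j j‖ ^ 2 ≤ (1 - m) * ∑ j, ∑ k, ‖M j k‖ ^ 2 := by
  classical
  have horth : ∀ a b : Fin t, ∑ j, (starRingEnd ℂ) (u a j) * u b j
      = if a = b then 1 else 0 := by
    intro a b
    have := orthonormal_iff_ite.mp hu a b
    simp only [PiLp.inner_apply, RCLike.inner_apply'] at this
    exact this
  set q : Fin d2 → ℝ := fun j => ∑ m', ‖u m' j‖ ^ 2 with hq
  have hq0 : ∀ j, 0 ≤ q j := fun j => Finset.sum_nonneg fun _ _ => sq_nonneg _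
  have hq1 : ∀ j, q j ≤ 1 := by
    intro j
    have hb := hu.sum_inner_products_le (s := Finset.univ) (EuclideanSpace.single j (1 : ℂ))
    have hnorm : ‖EuclideanSpace.single j (1:ℂ)‖ = 1 := by
      rw [EuclideanSpace.norm_single]; simp
    rw [hnorm, one_pow] at hb
    refine le_trans (le_of_eq ?_) hb
    refine Finset.sum_congr rfl fun a _ => ?_
    rw [EuclideanSpace.inner_single_right, one_mul, RCLike.norm_conj]
  have hqsum : ∑ j, q j = (t : ℝ) := by
    rw [hq]
    rw [Finset.sum_comm]
    have : ∀ a : Fin t, ∑ j, ‖u a j‖ ^ 2 = 1 := by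
      intro a
      have h := horth a a
      simp only [if_pos] at h
      have : ((∑ j, ‖u a j‖ ^ 2 : ℝ) : ℂ) = 1 := by
        rw [← h]; push_cast
        refine Finset.sum_congr rfl fun j _ => ?_
        rw [RCLike.conj_mul]
        norm_cast
      exact_mod_cast this
    simp only [this, Finset.sum_const, Finset.card_univ, Fintype.card_fin,
      nsmul_eq_mul, mul_one]
  have hpars : ∀ k, ∑ j, ‖M j k‖ ^ 2 = ∑ m', ‖γ m' k‖ ^ 2 := by
    intro k
    have hc : ((∑ j, ‖M j k‖ ^ 2 : ℝ) : ℂ) = ((∑ m', ‖γ m' k‖ ^ 2 : ℝ) : ℂ) := by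
      push_cast
      calc (∑ j, (‖M j k‖ : ℂ) ^ 2)
          = ∑ j, (starRingEnd ℂ) (M j k) * M j k := by
            refine Finset.sum_congr rfl fun j _ => ?_
            rw [RCLike.conj_mul]; norm_cast
        _ = ∑ j, ∑ a, ∑ b, ((starRingEnd ℂ) (γ a k) * γ b k) *
              ((starRingEnd ℂ) (u a j) * u b j) := by
            refine Finset.sum_congr rfl fun j _ => ?_
            rw [hM j k, map_sum, Finset.sum_mul]
            refine Finset.sum_congr rfl fun a _ => ?_
            rw [_root_.map_mul, Finset.mul_sum]
            refine Finset.sum_congr rfl fun b _ => ?_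
            ring
        _ = ∑ a, ∑ b, ((starRingEnd ℂ) (γ a k) * γ b k) *
              (∑ j, (starRingEnd ℂ) (u a j) * u b j) := by
            rw [Finset.sum_comm]
            refine Finset.sum_congr rfl fun a _ => ?_
            rw [Finset.sum_comm]
            refine Finset.sum_congr rfl fun b _ => ?_
            rw [Finset.mul_sum]
        _ = ∑ a, (starRingEnd ℂ) (γ a k) * γ a k := by
            refine Finset.sum_congr rfl fun a _ => ?_
            rw [Finset.sum_eq_single a]
            · rw [horth a a, if_pos rfl, mul_one]
            · intro b _ hb
              rw [horth a b, if_neg (Ne.symm hb), mul_zero]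
            · intro h; exact absurd (Finset.mem_univ a) h
        _ = ∑ a, (‖γ a k‖ : ℂ) ^ 2 := by
            refine Finset.sum_congr rfl fun a _ => ?_
            rw [RCLike.conj_mul]; norm_cast
    exact_mod_cast hc
  have hcs : ‖∑ j, (μ2 j : ℂ) * M j j‖ ^ 2 ≤
      (∑ j, μ2 j ^ 2 * q j) * (∑ j, ∑ m', ‖γ m' j‖ ^ 2) := by
    have h1 : ‖∑ j, (μ2 j : ℂ) * M j j‖ ≤
        ∑ p : Fin d2 × Fin t, (μ2 p.1 * ‖u p.2 p.1‖) * ‖γ p.2 p.1‖ := by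
      have : ∑ j, (μ2 j : ℂ) * M j j
          = ∑ p : Fin d2 × Fin t, ((μ2 p.1 : ℂ) * u p.2 p.1) * γ p.2 p.1 := by
        rw [Fintype.sum_prod_type]
        refine Finset.sum_congr rfl fun j _ => ?_
        rw [hM, Finset.mul_sum]
        refine Finset.sum_congr rfl fun a _ => ?_; ring
      rw [this]
      refine le_trans (norm_sum_le _ _) (le_of_eq ?_)
      refine Finset.sum_congr rfl fun p _ => ?_
      rw [norm_mul, norm_mul, Complex.norm_real, Real.norm_eq_abs,
        abs_of_nonneg (h2pos p.1)]
    have h2 := Finset.sum_mul_sq_le_sq_mul_sq Finset.univ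
      (fun p : Fin d2 × Fin t => μ2 p.1 * ‖u p.2 p.1‖) (fun p => ‖γ p.2 p.1‖)
    have h3 : ∑ p : Fin d2 × Fin t, (μ2 p.1 * ‖u p.2 p.1‖) ^ 2
        = ∑ j, μ2 j ^ 2 * q j := by
      rw [Fintype.sum_prod_type]
      refine Finset.sum_congr rfl fun j _ => ?_
      rw [hq, Finset.mul_sum]
      refine Finset.sum_congr rfl fun a _ => ?_; ring
    have h4 : ∑ p : Fin d2 × Fin t, ‖γ p.2 p.1‖ ^ 2 = ∑ j, ∑ m', ‖γ m' j‖ ^ 2 := by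
      rw [Fintype.sum_prod_type]
    calc ‖∑ j, (μ2 j : ℂ) * M j j‖ ^ 2
        ≤ (∑ p : Fin d2 × Fin t, (μ2 p.1 * ‖u p.2 p.1‖) * ‖γ p.2 p.1‖) ^ 2 := by
          exact pow_le_pow_left₀ (norm_nonneg _) h1 2
      _ ≤ (∑ p : Fin d2 × Fin t, (μ2 p.1 * ‖u p.2 p.1‖) ^ 2) *
            (∑ p : Fin d2 × Fin t, ‖γ p.2 p.1‖ ^ 2) := h2
      _ = (∑ j, μ2 j ^ 2 * q j) * (∑ j, ∑ m', ‖γ m' j‖ ^ 2) := by rw [h3, h4]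
  have hweight : ∑ j, μ2 j ^ 2 * q j ≤ 1 - m := by
    have hkey : m ≤ ∑ j, μ2 j ^ 2 * (1 - q j) := by
      set S2 : Finset (Fin d2) := Finset.univ.filter fun j => μ2 j ≠ 0 with hS2
      have step1 : ∑ j ∈ S2, μ2 j ^ 2 * (1 - q j) ≤ ∑ j, μ2 j ^ 2 * (1 - q j) := by
        refine Finset.sum_le_sum_of_subset_of_nonneg (Finset.subset_univ _) ?_
        intro j _ _
        exact mul_nonneg (sq_nonneg _) (by linarith [hq1 j])
      have step2 : ∑ j ∈ S2, m * (1 - q j) ≤ ∑ j ∈ S2, μ2 j ^ 2 * (1 - q j) := by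
        refine Finset.sum_le_sum fun j hj => ?_
        have hj' : μ2 j ≠ 0 := (Finset.mem_filter.mp hj).2
        exact mul_le_mul_of_nonneg_right (hmle j hj') (by linarith [hq1 j])
      have step3 : m * ((S2.card : ℝ) - t) ≤ ∑ j ∈ S2, m * (1 - q j) := by
        rw [← Finset.mul_sum]
        refine mul_le_mul_of_nonneg_left ?_ hm0
        rw [Finset.sum_sub_distrib, Finset.sum_const, nsmul_eq_mul, mul_one]
        have : ∑ j ∈ S2, q j ≤ ∑ j, q j :=
          Finset.sum_le_sum_of_subset_of_nonneg (Finset.subset_univ _)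
            (fun j _ _ => hq0 j)
        rw [hqsum] at this
        linarith
      have hcard : (t : ℝ) + 1 ≤ (S2.card : ℝ) := by
        have : t + 1 ≤ S2.card := ht
        exact_mod_cast this
      have : m * 1 ≤ m * ((S2.card : ℝ) - t) :=
        mul_le_mul_of_nonneg_left (by linarith) hm0
      linarith
    have hexp : ∑ j, μ2 j ^ 2 * (1 - q j) = 1 - ∑ j, μ2 j ^ 2 * q j := by
      have h' : ∑ j, μ2 j ^ 2 * (1 - q j) = ∑ j, (μ2 j ^ 2 - μ2 j ^ 2 * q j) :=
        Finset.sum_congr rfl fun j _ => by ring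
      rw [h', Finset.sum_sub_distrib, h2norm]
    linarith [hkey]
  have hγnn : 0 ≤ ∑ j, ∑ m', ‖γ m' j‖ ^ 2 :=
    Finset.sum_nonneg fun _ _ => Finset.sum_nonneg fun _ _ => sq_nonneg _
  calc ‖∑ j, (μ2 j : ℂ) * M j j‖ ^ 2
      ≤ (∑ j, μ2 j ^ 2 * q j) * (∑ j, ∑ m', ‖γ m' j‖ ^ 2) := hcs
    _ ≤ (1 - m) * (∑ j, ∑ m', ‖γ m' j‖ ^ 2) :=
        mul_le_mul_of_nonneg_right hweight hγnn
    _ = (1 - m) * ∑ j, ∑ k, ‖M j k‖ ^ 2 := by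
        congr 1
        rw [show (∑ j, ∑ k, ‖M j k‖ ^ 2) = ∑ k, ∑ j, ‖M j k‖ ^ 2 from Finset.sum_comm]
        exact Finset.sum_congr rfl fun k _ => (hpars k).symm

theorem nontrivial_simplified_witness_iff_smaller_schmidt_rank
    {d1 d2 : ℕ} (μ1 : Fin d1 → ℝ) (μ2 : Fin d2 → ℝ)
    (h1pos : ∀ i, 0 ≤ μ1 i) (h1norm : ∑ i, μ1 i ^ 2 = 1)
    (h2pos : ∀ i, 0 ≤ μ2 i) (h2norm : ∑ i, μ2 i ^ 2 = 1) :
    (∃ ε : ℝ, 0 < ε ∧ ∀ α β : Matrix (Fin d1) (Fin d2) ℂ,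
        (1 + ε) * ‖(diagC μ2 * βᵀ * diagC μ1 * α).trace‖ ^ 2 ≤
          (((βᵀ * diagC μ1 * α)ᴴ * (βᵀ * diagC μ1 * α)).trace).re)
      ↔ nnzCount μ1 < nnzCount μ2 := by
  classical
  have hS1ex : ∃ i, μ1 i ≠ 0 := by
    by_contra hall
    push_neg at hall
    rw [Finset.sum_eq_zero (fun i _ => by rw [hall i]; ring)] at h1norm
    norm_num at h1norm
  constructor
  · rintro ⟨ε, hε, h⟩
    by_contra hlt
    push_neg at hlt
    obtain ⟨i0, _⟩ := hS1ex
    set S1 : Finset (Fin d1) := Finset.univ.filter fun i => μ1 i ≠ 0 with hS1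
    set S2 : Finset (Fin d2) := Finset.univ.filter fun j => μ2 j ≠ 0 with hS2
    have hcard : Fintype.card {j // j ∈ S2} ≤ Fintype.card {i // i ∈ S1} := by
      rw [Fintype.card_coe, Fintype.card_coe]; exact hlt
    obtain ⟨e⟩ := Function.Embedding.nonempty_of_card_le hcard
    set g : Fin d2 → Fin d1 := fun j =>
      if hj : μ2 j ≠ 0 then
        (e ⟨j, Finset.mem_filter.mpr ⟨Finset.mem_univ j, hj⟩⟩ : Fin d1)
      else i0 with hg
    have hg1 : ∀ j, μ2 j ≠ 0 → μ1 (g j) ≠ 0 := by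
      intro j hj
      rw [hg]
      simp only [dif_pos hj]
      exact (Finset.mem_filter.mp
        (e ⟨j, Finset.mem_filter.mpr ⟨Finset.mem_univ j, hj⟩⟩).2).2
    have hginj : ∀ j k, μ2 j ≠ 0 → μ2 k ≠ 0 → g j = g k → j = k := by
      intro j k hj hk hgjk
      rw [hg] at hgjk
      simp only [dif_pos hj, dif_pos hk] at hgjk
      have := e.injective (Subtype.ext hgjk)
      exact Subtype.mk_eq_mk.mp this
    set β' : Matrix (Fin d1) (Fin d2) ℂ :=
      Matrix.of fun i j => if μ2 j ≠ 0 ∧ g j = i then ((μ1 i : ℂ))⁻¹ else 0 with hβ'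
    set α' : Matrix (Fin d1) (Fin d2) ℂ :=
      Matrix.of fun i k => if μ2 k ≠ 0 ∧ g k = i then (μ2 k : ℂ) else 0 with hα'
    have hβapp : ∀ i j, β' i j = if μ2 j ≠ 0 ∧ g j = i then ((μ1 i : ℂ))⁻¹ else 0 :=
      fun i j => rfl
    have hαapp : ∀ i k, α' i k = if μ2 k ≠ 0 ∧ g k = i then (μ2 k : ℂ) else 0 :=
      fun i k => rfl
    have hM : ∀ j k, (β'ᵀ * diagC μ1 * α') j k = if j = k then (μ2 j : ℂ) else 0 := by
      intro j k
      rw [entry_eq]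
      by_cases hj : μ2 j = 0
      · have hz : ∀ i, β' i j * (μ1 i : ℂ) * α' i k = 0 := by
          intro i
          rw [hβapp, if_neg (fun hc => hc.1 hj), zero_mul, zero_mul]
        rw [Finset.sum_eq_zero fun i _ => hz i]
        by_cases hjk : j = k
        · rw [if_pos hjk, hj]; norm_num
        · rw [if_neg hjk]
      · by_cases hk : μ2 k = 0
        · have hz : ∀ i, β' i j * (μ1 i : ℂ) * α' i k = 0 := by
            intro i
            rw [hαapp, if_neg (fun hc => hc.1 hk), mul_zero]
          rw [Finset.sum_eq_zero fun i _ => hz i]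
          by_cases hjk : j = k
          · exfalso; exact hj (hjk ▸ hk)
          · rw [if_neg hjk]
        · by_cases hjk : j = k
          · subst hjk
            rw [if_pos rfl]
            rw [Finset.sum_eq_single (g j)]
            · rw [hβapp, hαapp, if_pos ⟨hj, rfl⟩, if_pos ⟨hj, rfl⟩]
              have hne : ((μ1 (g j) : ℂ)) ≠ 0 := by
                exact_mod_cast hg1 j hj
              field_simp
            · intro i _ hi
              rw [hβapp, if_neg (fun hc => hi hc.2.symm), zero_mul, zero_mul]
            · intro habs; exact absurd (Finset.mem_univ _) habs
          · rw [if_neg hjk]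
            refine Finset.sum_eq_zero fun i _ => ?_
            by_cases hbi : μ2 j ≠ 0 ∧ g j = i
            · have : α' i k = 0 := by
                rw [hαapp, if_neg]
                rintro ⟨hk', hgk⟩
                exact hjk (hginj j k hj hk' (hbi.2.trans hgk.symm))
              rw [this, mul_zero]
            · rw [hβapp, if_neg hbi, zero_mul, zero_mul]
    have hassoc : diagC μ2 * β'ᵀ * diagC μ1 * α'
        = diagC μ2 * (β'ᵀ * diagC μ1 * α') := by
      rw [Matrix.mul_assoc, Matrix.mul_assoc, Matrix.mul_assoc]
    have htr1 : (diagC μ2 * β'ᵀ * diagC μ1 * α').trace = 1 := by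
      rw [hassoc, trace1]
      have hterm : ∀ j, (μ2 j : ℂ) * (β'ᵀ * diagC μ1 * α') j j = ((μ2 j : ℝ)^2 : ℝ) := by
        intro j
        rw [hM j j, if_pos rfl]
        push_cast
        ring
      rw [Finset.sum_congr rfl fun j _ => hterm j]
      rw [← Complex.ofReal_sum]
      rw [h2norm]
      norm_num
    have htr2 : (((β'ᵀ * diagC μ1 * α')ᴴ * (β'ᵀ * diagC μ1 * α')).trace).re = 1 := by
      rw [trace2]
      have : ∀ j, ∑ k, ‖(β'ᵀ * diagC μ1 * α') j k‖ ^ 2 = μ2 j ^ 2 := by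
        intro j
        rw [Finset.sum_eq_single j]
        · rw [hM j j, if_pos rfl, Complex.norm_real, Real.norm_eq_abs, sq_abs]
        · intro k _ hk
          rw [hM j k, if_neg (fun h => hk h.symm), norm_zero]
          norm_num
        · intro habs; exact absurd (Finset.mem_univ _) habs
      rw [Finset.sum_congr rfl fun j _ => this j, h2norm]
    have hfin := h α' β'
    rw [htr1, htr2] at hfin
    rw [norm_one, one_pow, mul_one] at hfin
    linarith
  · intro hr
    set S2 : Finset (Fin d2) := Finset.univ.filter fun j => μ2 j ≠ 0 with hS2
    have hS2ne : S2.Nonempty := by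
      rw [← Finset.card_pos]
      have : 0 < nnzCount μ2 := lt_of_le_of_lt (Nat.zero_le _) hr
      exact this
    set m : ℝ := S2.inf' hS2ne (fun j => μ2 j ^ 2) with hm
    obtain ⟨j0, hj0, hj0e⟩ := Finset.exists_mem_eq_inf' hS2ne (fun j => μ2 j ^ 2)
    have hj0ne : μ2 j0 ≠ 0 := (Finset.mem_filter.mp hj0).2
    have hm0 : 0 < m := by
      rw [hm, hj0e]
      exact lt_of_le_of_ne (sq_nonneg _) (Ne.symm (pow_ne_zero 2 hj0ne))
    have hmle : ∀ j, μ2 j ≠ 0 → m ≤ μ2 j ^ 2 := by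
      intro j hj
      exact Finset.inf'_le _ (Finset.mem_filter.mpr ⟨Finset.mem_univ j, hj⟩)
    have hm1 : m < 1 := by
      have h1le : 1 ≤ nnzCount μ1 := by
        obtain ⟨i, hi⟩ := hS1ex
        have : i ∈ Finset.univ.filter fun i => μ1 i ≠ 0 :=
          Finset.mem_filter.mpr ⟨Finset.mem_univ i, hi⟩
        exact Finset.card_pos.mpr ⟨i, this⟩
      have h2le : 2 ≤ S2.card := by
        have : 1 < nnzCount μ2 := lt_of_le_of_lt h1le hr
        exact this
      obtain ⟨j1, hj1, hj1ne⟩ := Finset.exists_mem_ne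
        (lt_of_lt_of_le one_lt_two h2le) j0
      have hj1pos : 0 < μ2 j1 ^ 2 := by
        have h := (Finset.mem_filter.mp hj1).2
        exact lt_of_le_of_ne (sq_nonneg _) (Ne.symm (pow_ne_zero 2 h))
      have hsum : μ2 j0 ^ 2 + μ2 j1 ^ 2 ≤ 1 := by
        rw [← h2norm]
        rw [← Finset.sum_pair (a := j0) (b := j1) (f := fun j => μ2 j ^ 2)
          (Ne.symm hj1ne)]
        refine Finset.sum_le_sum_of_subset_of_nonneg (Finset.subset_univ _) ?_
        intro j _ _
        exact sq_nonneg _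
      rw [hm, hj0e]
      linarith
    refine ⟨m / (1 - m), div_pos hm0 (by linarith), ?_⟩
    intro α β
    obtain ⟨t, u, γ, ht, hu, hMexp⟩ := exists_expansion μ1 α β
    have ht2 : t < nnzCount μ2 := lt_of_le_of_lt ht hr
    have hkb := key_bound μ2 m h2pos hm0.le hmle h2norm ht2 u hu γ _ hMexp
    have hassoc : diagC μ2 * βᵀ * diagC μ1 * α
        = diagC μ2 * (βᵀ * diagC μ1 * α) := by
      rw [Matrix.mul_assoc, Matrix.mul_assoc, Matrix.mul_assoc]
    rw [hassoc, trace1, trace2]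
    have h1mne : (1 : ℝ) - m ≠ 0 := by linarith
    have hprod : (1 + m / (1 - m)) * (1 - m) = 1 := by
      field_simp
      ring
    calc (1 + m / (1 - m)) * ‖∑ j, (μ2 j : ℂ) * (βᵀ * diagC μ1 * α) j j‖ ^ 2
        ≤ (1 + m / (1 - m)) * ((1 - m) * ∑ j, ∑ k, ‖(βᵀ * diagC μ1 * α) j k‖ ^ 2) := by
          refine mul_le_mul_of_nonneg_left hkb ?_
          have : 0 ≤ m / (1 - m) := le_of_lt (div_pos hm0 (by linarith))
          linarith
      _ = ∑ j, ∑ k, ‖(βᵀ * diagC μ1 * α) j k‖ ^ 2 := by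
          rw [← mul_assoc, hprod, one_mul]
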